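/- For every function g : {0,1}^k × {0,1}^k → {0,1} and every integer h ≥ 1 there exists b ∈ {0,1} such that the following holds: for every probability distribution μ over b-monochromatic rectangles of g there exist subsets X, Y ⊆ {0,1}^k, each of size at least 2^{k−h}, such that Pr_{R∼μ}[R ∩ (X × Y) ≠ ∅] ≤ 2^{k−2h+1}. -/

import Mathlib

open Finset

/-- The probability, under a distribution `μ` on rectangles `R = R.1 × R.2 ⊆ α × β`,
that the sampled rectangle intersects `X × Y`. -/
noncomputable def hitProb {α β : Type*} [Fintype α] [Fintype β] [DecidableEq α] [DecidableEq β]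
    (μ : Finset α × Finset β → ℝ) (X : Finset α) (Y : Finset β) : ℝ :=
  ∑ R ∈ Finset.univ.filter
      (fun R : Finset α × Finset β => (R.1 ∩ X).Nonempty ∧ (R.2 ∩ Y).Nonempty), μ R

/-- `μ` is a probability distribution on rectangles of `α × β`. -/
def IsDistribution {α β : Type*} [Fintype α] [Fintype β]
    (μ : Finset α × Finset β → ℝ) : Prop :=
  (∀ R, 0 ≤ μ R) ∧ ∑ R, μ R = 1

lemma aux_zpow_le (k h : ℕ) : (2 : ℝ) ^ ((k : ℤ) - h) ≤ ((2 ^ (k - h) : ℕ) : ℝ) := by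
  have h1 : ((k : ℤ) - h) ≤ ((k - h : ℕ) : ℤ) := by omega
  calc (2 : ℝ) ^ ((k : ℤ) - h) ≤ 2 ^ (((k - h : ℕ) : ℤ)) := zpow_le_zpow_right₀ one_le_two h1
    _ = ((2 ^ (k - h) : ℕ) : ℝ) := by push_cast [zpow_natCast]; ring

/-- Cardinality of a fiber block of an equivalence onto a product. -/
lemma aux_block_card {α V W : Type*} [Fintype α] [Fintype V] [Fintype W]
    [DecidableEq α] [DecidableEq V] (e : α ≃ V × W) (v : V) :
    (univ.filter (fun x => (e x).1 = v)).card = Fintype.card W := by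
  have h1 : (univ.filter (fun x : α => (e x).1 = v)).card
      = Fintype.card {x : α // (e x).1 = v} := (Fintype.card_subtype _).symm
  have e2 : {x : α // (e x).1 = v} ≃ W :=
    { toFun := fun p => (e p.1).2
      invFun := fun w => ⟨e.symm (v, w), by simp⟩
      left_inv := by
        rintro ⟨x, hx⟩
        ext : 1
        apply e.injective
        simp only [Equiv.apply_symm_apply]
        rw [← hx]
      right_inv := fun w => by simp }
  rw [h1, Fintype.card_congr e2]

/-- The number of blocks meeting a set `S` is at most `|S|`. -/
lemma aux_block_count {α V W : Type*} [Fintype α] [Fintype V] [Fintype W] [Inhabited α]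
    [DecidableEq α] [DecidableEq V] (e : α ≃ V × W) (S : Finset α) :
    (univ.filter (fun v : V =>
      (S ∩ univ.filter (fun x => (e x).1 = v)).Nonempty)).card ≤ S.card := by
  classical
  set f : V → α := fun v =>
    if hne : (S ∩ univ.filter (fun x => (e x).1 = v)).Nonempty then hne.choose
    else default with hf
  apply Finset.card_le_card_of_injOn f
  · intro v hv
    rw [Finset.mem_coe, mem_filter] at hv
    have hne := hv.2
    have hs := hne.choose_spec
    rw [Finset.mem_inter] at hs
    simpa [hf, hne] using hs.1
  · intro v1 hv1 v2 hv2 hfe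
    simp only [coe_filter, Set.mem_setOf_eq] at hv1 hv2
    have hne1 := hv1.2
    have hne2 := hv2.2
    have hs1 := hne1.choose_spec
    have hs2 := hne2.choose_spec
    rw [Finset.mem_inter] at hs1 hs2
    simp only [hf, dif_pos hne1, dif_pos hne2] at hfe
    have b1 : (e hne1.choose).1 = v1 := (Finset.mem_filter.mp hs1.2).2
    have b2 : (e hne2.choose).1 = v2 := (Finset.mem_filter.mp hs2.2).2
    rw [← b1, ← b2, hfe]

/-- For every `g : {0,1}^k × {0,1}^k → {0,1}` and every integer `h ≥ 1`
there is `b ∈ {0,1}` such that: for every probability distribution `μ` over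
`b`-monochromatic rectangles of `g` there are `X, Y ⊆ {0,1}^k`, each of size at least
`2^(k−h)`, with `Pr_{R∼μ}[R ∩ (X × Y) ≠ ∅] ≤ 2^(k−2h+1)`. -/
theorem hitting_distributions_lower_bound (k : ℕ)
    (g : (Fin k → Bool) → (Fin k → Bool) → Bool) (h : ℕ) (hh : 1 ≤ h) :
    ∃ b : Bool, ∀ μ : Finset (Fin k → Bool) × Finset (Fin k → Bool) → ℝ,
      IsDistribution μ →
      (∀ R, μ R ≠ 0 → ∀ x ∈ R.1, ∀ y ∈ R.2, g x y = b) →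
      ∃ X Y : Finset (Fin k → Bool),
        (2 : ℝ) ^ ((k : ℤ) - h) ≤ X.card ∧
        (2 : ℝ) ^ ((k : ℤ) - h) ≤ Y.card ∧
        hitProb μ X Y ≤ (2 : ℝ) ^ ((k : ℤ) - 2 * h + 1) := by
  classical
  by_cases hA : ∃ (b' : Bool) (A B : Finset (Fin k → Bool)),
      2 ^ (k - h) ≤ A.card ∧ 2 ^ (k - h) ≤ B.card ∧ ∀ x ∈ A, ∀ y ∈ B, g x y = b'
  · -- Case A : a big b'-mono rectangle exists; pick b = !b'
    obtain ⟨b', A, B, hAc, hBc, hmono⟩ := hA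
    refine ⟨!b', fun μ hdist hsupp => ⟨A, B, ?_, ?_, ?_⟩⟩
    · exact le_trans (aux_zpow_le k h) (by exact_mod_cast hAc)
    · exact le_trans (aux_zpow_le k h) (by exact_mod_cast hBc)
    · have h0 : hitProb μ A B = 0 := by
        apply Finset.sum_eq_zero
        intro R hR
        rw [mem_filter] at hR
        obtain ⟨⟨x, hx⟩, ⟨y, hy⟩⟩ := hR.2
        rw [Finset.mem_inter] at hx hy
        by_contra hμ
        have h1 := hsupp R hμ x hx.1 y hy.1
        have h2 := hmono x hx.2 y hy.2
        rw [h1] at h2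
        simp at h2
      rw [h0]
      positivity
  · -- Case B : no color has a big mono rectangle
    push_neg at hA
    have hk : h ≤ k := by
      by_contra hk
      have hm1 : k - h = 0 := by omega
      have x0 : Fin k → Bool := fun _ => false
      obtain ⟨x, hx, y, hy, hxy⟩ :=
        hA (g x0 x0) {x0} {x0} (by simp [hm1]) (by simp [hm1])
      simp only [Finset.mem_singleton] at hx hy
      subst hx; subst hy; exact hxy rfl
    have hcard : Fintype.card (Fin k → Bool)
        = Fintype.card ((Fin h → Bool) × (Fin (k - h) → Bool)) := by
      simp [← pow_add]
      omega
    obtain ⟨e⟩ : Nonempty ((Fin k → Bool) ≃ (Fin h → Bool) × (Fin (k - h) → Bool)) :=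
      ⟨Fintype.equivOfCardEq hcard⟩
    have hBlkcard : ∀ v, (univ.filter (fun x => (e x).1 = v)).card = 2 ^ (k - h) := by
      intro v
      rw [aux_block_card e v]
      simp
    refine ⟨false, fun μ hdist hsupp => ?_⟩
    -- per-rectangle count bound
    have hterm : ∀ R : Finset (Fin k → Bool) × Finset (Fin k → Bool),
        ((univ.filter (fun p : (Fin h → Bool) × (Fin h → Bool) =>
          (R.1 ∩ univ.filter (fun x => (e x).1 = p.1)).Nonempty ∧
          (R.2 ∩ univ.filter (fun x => (e x).1 = p.2)).Nonempty)).card : ℝ) * μ R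
        ≤ (2 ^ k : ℕ) * μ R := by
      intro R
      rcases eq_or_ne (μ R) 0 with h0 | h0
      · rw [h0]; simp
      · have hpos : 0 < μ R := lt_of_le_of_ne (hdist.1 R) (Ne.symm h0)
        apply mul_le_mul_of_nonneg_right _ (le_of_lt hpos)
        have hmono := hsupp R h0
        have hnot : ¬(2 ^ (k - h) ≤ R.1.card ∧ 2 ^ (k - h) ≤ R.2.card) := by
          rintro ⟨h1, h2⟩
          obtain ⟨x, hx, y, hy, hxy⟩ := hA false R.1 R.2 h1 h2
          exact hxy (hmono x hx y hy)
        -- split the product filter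
        rw [← Finset.univ_product_univ,
          Finset.filter_product
            (fun v : Fin h → Bool => (R.1 ∩ univ.filter (fun x => (e x).1 = v)).Nonempty)
            (fun v : Fin h → Bool => (R.2 ∩ univ.filter (fun x => (e x).1 = v)).Nonempty),
          Finset.card_product]
        have ha1 : (univ.filter (fun v : Fin h → Bool =>
            (R.1 ∩ univ.filter (fun x => (e x).1 = v)).Nonempty)).card ≤ R.1.card :=
          aux_block_count e R.1
        have ha2 : (univ.filter (fun v : Fin h → Bool =>
            (R.2 ∩ univ.filter (fun x => (e x).1 = v)).Nonempty)).card ≤ R.2.card :=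
          aux_block_count e R.2
        have hb1 : (univ.filter (fun v : Fin h → Bool =>
            (R.1 ∩ univ.filter (fun x => (e x).1 = v)).Nonempty)).card ≤ 2 ^ h := by
          calc _ ≤ (univ : Finset (Fin h → Bool)).card := Finset.card_filter_le _ _
            _ = 2 ^ h := by simp
        have hb2 : (univ.filter (fun v : Fin h → Bool =>
            (R.2 ∩ univ.filter (fun x => (e x).1 = v)).Nonempty)).card ≤ 2 ^ h := by
          calc _ ≤ (univ : Finset (Fin h → Bool)).card := Finset.card_filter_le _ _
            _ = 2 ^ h := by simp
        have hkey : (univ.filter (fun v : Fin h → Bool =>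
              (R.1 ∩ univ.filter (fun x => (e x).1 = v)).Nonempty)).card *
            (univ.filter (fun v : Fin h → Bool =>
              (R.2 ∩ univ.filter (fun x => (e x).1 = v)).Nonempty)).card ≤ 2 ^ k := by
          rcases not_and_or.mp hnot with hc | hc
          · push_neg at hc
            calc _ ≤ 2 ^ (k - h) * 2 ^ h :=
                  Nat.mul_le_mul (le_trans ha1 (le_of_lt hc)) hb2
              _ = 2 ^ k := by rw [← pow_add]; congr 1; omega
          · push_neg at hc
            calc _ ≤ 2 ^ h * 2 ^ (k - h) :=
                  Nat.mul_le_mul hb1 (le_trans ha2 (le_of_lt hc))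
              _ = 2 ^ k := by rw [← pow_add]; congr 1; omega
        exact_mod_cast hkey
    -- total over all block pairs
    have key : ∑ p : (Fin h → Bool) × (Fin h → Bool),
        hitProb μ (univ.filter (fun x => (e x).1 = p.1))
          (univ.filter (fun x => (e x).1 = p.2)) ≤ ((2 ^ k : ℕ) : ℝ) := by
      have hswap : ∑ p : (Fin h → Bool) × (Fin h → Bool),
          hitProb μ (univ.filter (fun x => (e x).1 = p.1))
            (univ.filter (fun x => (e x).1 = p.2))
          = ∑ R : Finset (Fin k → Bool) × Finset (Fin k → Bool),
              ((univ.filter (fun p : (Fin h → Bool) × (Fin h → Bool) =>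
                (R.1 ∩ univ.filter (fun x => (e x).1 = p.1)).Nonempty ∧
                (R.2 ∩ univ.filter (fun x => (e x).1 = p.2)).Nonempty)).card : ℝ) * μ R := by
        simp only [hitProb, Finset.sum_filter]
        rw [Finset.sum_comm]
        congr 1
        ext R
        rw [← Finset.sum_filter, Finset.sum_const, nsmul_eq_mul]
      rw [hswap]
      calc ∑ R : Finset (Fin k → Bool) × Finset (Fin k → Bool),
            ((univ.filter (fun p : (Fin h → Bool) × (Fin h → Bool) =>
              (R.1 ∩ univ.filter (fun x => (e x).1 = p.1)).Nonempty ∧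
              (R.2 ∩ univ.filter (fun x => (e x).1 = p.2)).Nonempty)).card : ℝ) * μ R
          ≤ ∑ R : Finset (Fin k → Bool) × Finset (Fin k → Bool), ((2 ^ k : ℕ) : ℝ) * μ R :=
            Finset.sum_le_sum (fun R _ => hterm R)
        _ = ((2 ^ k : ℕ) : ℝ) := by rw [← Finset.mul_sum, hdist.2, mul_one]
    -- average over block pairs
    have hcV : ((univ : Finset ((Fin h → Bool) × (Fin h → Bool))).card : ℝ)
        = (2 : ℝ) ^ ((2 * h : ℕ) : ℤ) := by
      rw [Finset.card_univ, zpow_natCast]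
      norm_cast
      simp [two_mul, pow_add]
    have hc : ((2 ^ k : ℕ) : ℝ)
        = (univ : Finset ((Fin h → Bool) × (Fin h → Bool))).card
          * (2 : ℝ) ^ ((k : ℤ) - 2 * h) := by
      rw [hcV, ← zpow_add₀ (two_ne_zero : (2:ℝ) ≠ 0)]
      have hexp : ((2 * h : ℕ) : ℤ) + ((k : ℤ) - 2 * h) = (k : ℕ) := by push_cast; ring
      rw [hexp, zpow_natCast]
      norm_cast
    obtain ⟨p, _, hp⟩ := Finset.exists_le_of_sum_le
      (s := (univ : Finset ((Fin h → Bool) × (Fin h → Bool))))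
      (f := fun p : (Fin h → Bool) × (Fin h → Bool) =>
        hitProb μ (univ.filter (fun x => (e x).1 = p.1))
          (univ.filter (fun x => (e x).1 = p.2)))
      (g := fun _ => (2 : ℝ) ^ ((k : ℤ) - 2 * h))
      Finset.univ_nonempty (by
        rw [Finset.sum_const, nsmul_eq_mul]
        exact le_of_le_of_eq key hc)
    refine ⟨univ.filter (fun x => (e x).1 = p.1), univ.filter (fun x => (e x).1 = p.2),
      ?_, ?_, ?_⟩
    · rw [hBlkcard p.1]; exact_mod_cast aux_zpow_le k h
    · rw [hBlkcard p.2]; exact_mod_cast aux_zpow_le k h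
    · calc hitProb μ _ _ ≤ (2 : ℝ) ^ ((k : ℤ) - 2 * h) := hp
        _ ≤ (2 : ℝ) ^ ((k : ℤ) - 2 * h + 1) :=
          zpow_le_zpow_right₀ one_le_two (by omega)
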